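/- Suppose for each j the quadrature rule Q_{N_j} integrates exactly all products P_ℓ·conj(P_{ℓ'}) with λ_ℓ, λ_{ℓ'} ≤ 2^{j−1} (i.e., Σ_k ω_{j,k} P_ℓ(x_{j,k}) conj(P_{ℓ'}(x_{j,k})) = δ_{ℓℓ'}), and the masks satisfy |â(λ_ℓ/2^j)|² + Σ_{n=1}^r |b̂_n(λ_ℓ/2^j)|² = 1 for all j, ℓ, with supp(α̂), supp(β̂^n) ⊆ [0,1/2] and the refinement relations α̂(2ξ) = â(ξ)α̂(ξ), β̂^n(2ξ) = b̂_n(ξ)α̂(ξ). Then for every f ∈ L²(T²) and every j ≥ 0: Σ_{k=1}^{N_{j+1}} |⟨f, φ_{j+1,k}⟩|² = Σ_{k=1}^{N_j} |⟨f, φ_{j,k}⟩|² + Σ_{k=1}^{N_{j+1}} Σ_{n=1}^r |⟨f, ψ^n_{j,k}⟩|². -/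

import Mathlib

open Finset in
lemma quad_reduce {H : Type*} [NormedAddCommGroup H] [InnerProductSpace ℂ H] {T : Type*}
    (v : ℕ → H) (f : H) (P : ℕ → T → ℂ) (xp : ℕ → T) (w : ℕ → ℝ)
    (hw : ∀ k, 0 ≤ w k) (M : ℕ) (Ts : Finset ℕ) (g : ℕ → ℂ)
    (hq : ∀ ℓ ∈ Ts, ∀ ℓ' ∈ Ts,
      ∑ k ∈ range M, (w k : ℂ) * P ℓ (xp k) * starRingEnd ℂ (P ℓ' (xp k)) =
        if ℓ = ℓ' then 1 else 0) :
    ∑ k ∈ range M, ‖(inner ℂ ((Real.sqrt (w k) : ℂ) •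
        ∑ ℓ ∈ Ts, (g ℓ * starRingEnd ℂ (P ℓ (xp k))) • v ℓ) f : ℂ)‖ ^ 2
      = ∑ ℓ ∈ Ts, ‖(g ℓ)‖ ^ 2 * ‖(inner ℂ (v ℓ) f : ℂ)‖ ^ 2 := by
  set c : ℕ → ℂ := fun ℓ => inner ℂ (v ℓ) f with hc
  have hterm : ∀ k, (inner ℂ ((Real.sqrt (w k) : ℂ) •
        ∑ ℓ ∈ Ts, (g ℓ * starRingEnd ℂ (P ℓ (xp k))) • v ℓ) f : ℂ)
      = (Real.sqrt (w k) : ℂ) *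
        ∑ ℓ ∈ Ts, starRingEnd ℂ (g ℓ) * P ℓ (xp k) * c ℓ := by
    intro k
    rw [inner_smul_left, Complex.conj_ofReal, sum_inner]
    congr 1
    apply Finset.sum_congr rfl
    intro ℓ _
    rw [inner_smul_left, map_mul, Complex.conj_conj]
  simp_rw [hterm]
  have habs : ∀ k, ‖((Real.sqrt (w k) : ℂ) *
        ∑ ℓ ∈ Ts, starRingEnd ℂ (g ℓ) * P ℓ (xp k) * c ℓ)‖ ^ 2
      = w k * ‖(∑ ℓ ∈ Ts, starRingEnd ℂ (g ℓ) * P ℓ (xp k) * c ℓ)‖ ^ 2 := by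
    intro k
    rw [norm_mul, mul_pow, Complex.norm_real, Real.norm_eq_abs, abs_of_nonneg (Real.sqrt_nonneg _),
      Real.sq_sqrt (hw k)]
  simp_rw [habs]
  apply Complex.ofReal_injective
  have hsq : ∀ z : ℂ, ((‖z‖ ^ 2 : ℝ) : ℂ) = z * starRingEnd ℂ z := by
    intro z
    rw [Complex.sq_norm, Complex.mul_conj]
  push_cast [← Complex.ofReal_pow]
  simp_rw [Complex.ofReal_pow, ← Complex.ofReal_pow, hsq]
  -- now a pure ℂ identity
  have expand : ∀ k, (∑ ℓ ∈ Ts, starRingEnd ℂ (g ℓ) * P ℓ (xp k) * c ℓ) *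
      starRingEnd ℂ (∑ ℓ ∈ Ts, starRingEnd ℂ (g ℓ) * P ℓ (xp k) * c ℓ)
      = ∑ ℓ ∈ Ts, ∑ ℓ' ∈ Ts,
        (starRingEnd ℂ (g ℓ) * c ℓ * g ℓ' * starRingEnd ℂ (c ℓ')) *
          (P ℓ (xp k) * starRingEnd ℂ (P ℓ' (xp k))) := by
    intro k
    rw [map_sum, Finset.sum_mul_sum]
    apply Finset.sum_congr rfl; intro ℓ _
    apply Finset.sum_congr rfl; intro ℓ' _
    simp only [map_mul, Complex.conj_conj]
    ring
  simp_rw [expand, Finset.mul_sum]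
  rw [Finset.sum_comm]
  refine Finset.sum_congr rfl fun ℓ hℓ => ?_
  rw [Finset.sum_comm]
  have step : ∀ ℓ', ∑ k ∈ range M, (w k : ℂ) *
      ((starRingEnd ℂ (g ℓ) * c ℓ * g ℓ' * starRingEnd ℂ (c ℓ')) *
        (P ℓ (xp k) * starRingEnd ℂ (P ℓ' (xp k))))
      = (starRingEnd ℂ (g ℓ) * c ℓ * g ℓ' * starRingEnd ℂ (c ℓ')) *
        ∑ k ∈ range M, (w k : ℂ) * P ℓ (xp k) * starRingEnd ℂ (P ℓ' (xp k)) := by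
    intro ℓ'
    rw [Finset.mul_sum]
    apply Finset.sum_congr rfl; intro k _; ring
  simp_rw [step]
  have step2 : ∀ ℓ' ∈ Ts, (starRingEnd ℂ (g ℓ) * c ℓ * g ℓ' * starRingEnd ℂ (c ℓ')) *
        (∑ k ∈ range M, (w k : ℂ) * P ℓ (xp k) * starRingEnd ℂ (P ℓ' (xp k)))
      = if ℓ = ℓ' then (starRingEnd ℂ (g ℓ) * c ℓ * g ℓ' * starRingEnd ℂ (c ℓ')) else 0 := by
    intro ℓ' hℓ'
    rw [hq ℓ hℓ ℓ' hℓ']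
    split <;> simp
  rw [Finset.sum_congr rfl step2, Finset.sum_ite_eq Ts ℓ, if_pos hℓ]
  ring



open Finset in
/-- Multiscale identity for framelet coefficients between adjacent levels: if the
quadrature rules are exact for the relevant products of basis functions and the masks
satisfy the tightness condition together with the refinement relations, then
`Σ_k |⟨f, φ_{j+1,k}⟩|² = Σ_k |⟨f, φ_{j,k}⟩|² + Σ_k Σ_n |⟨f, ψ^n_{j,k}⟩|²`.
Here `H = L²(T²)`, `Pvec ℓ` is the `ℓ`-th orthonormal basis element of `L²(T²)` and
`P ℓ t` its value at `t ∈ T²`; since `α̂` and the `β̂ⁿ` are supported in `[0,1/2]`,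
the framelets `φ_{j,k}` and `ψ^n_{j,k}` are the finite sums below (only degrees with
`λ_ℓ ≤ 2^{j-1} < 2^{j+1}` contribute, as `λ_ℓ ≥ ℓ`). -/
theorem framelet_coefficient_norm_identity
    {H : Type*} [NormedAddCommGroup H] [InnerProductSpace ℂ H] {T : Type*}
    (Pvec : ℕ → H) (hP : Orthonormal ℂ Pvec)
    (P : ℕ → T → ℂ) (x : ℕ → ℕ → T) (ω : ℕ → ℕ → ℝ) (N : ℕ → ℕ)
    (lam : ℕ → ℝ) (hlam : ∀ ℓ : ℕ, lam ℓ = Real.sqrt (ℓ * (ℓ + 2)))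
    (r : ℕ) (ahat : ℝ → ℂ) (bhat : ℕ → ℝ → ℂ) (alphahat : ℝ → ℂ) (betahat : ℕ → ℝ → ℂ)
    -- the quadrature rule `Q_{N_j}` integrates `P_ℓ ⬝ conj(P_ℓ')` exactly
    (hquad : ∀ j ℓ ℓ' : ℕ, lam ℓ ≤ (2 : ℝ) ^ ((j : ℤ) - 1) →
      lam ℓ' ≤ (2 : ℝ) ^ ((j : ℤ) - 1) →
      ∑ k ∈ range (N j), (ω j k : ℂ) * P ℓ (x j k) * starRingEnd ℂ (P ℓ' (x j k)) =
        if ℓ = ℓ' then 1 else 0)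
    -- tightness condition on the masks
    (htight : ∀ j ℓ : ℕ, ‖(ahat (lam ℓ / 2 ^ j))‖ ^ 2
        + ∑ n ∈ range r, ‖(bhat n (lam ℓ / 2 ^ j))‖ ^ 2 = 1)
    -- support conditions
    (hsuppα : ∀ ξ : ℝ, ξ ∉ Set.Icc (0 : ℝ) (1 / 2) → alphahat ξ = 0)
    (hsuppβ : ∀ n : ℕ, ∀ ξ : ℝ, ξ ∉ Set.Icc (0 : ℝ) (1 / 2) → betahat n ξ = 0)
    -- refinement relations
    (hrefα : ∀ ξ : ℝ, alphahat (2 * ξ) = ahat ξ * alphahat ξ)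
    (hrefβ : ∀ n : ℕ, ∀ ξ : ℝ, betahat n (2 * ξ) = bhat n ξ * alphahat ξ)
    -- positive quadrature weights
    (hω : ∀ j k : ℕ, 0 ≤ ω j k)
    (f : H) (j : ℕ) :
    let S : ℕ → Finset ℕ := fun j' =>
      (range (2 ^ (j' + 1))).filter fun ℓ => lam ℓ ≤ (2 : ℝ) ^ ((j' : ℤ) - 1)
    let φ : ℕ → ℕ → H := fun j' k => (Real.sqrt (ω j' k) : ℂ) •
      ∑ ℓ ∈ S j', (alphahat (lam ℓ / 2 ^ j') * starRingEnd ℂ (P ℓ (x j' k))) • Pvec ℓ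
    let ψ : ℕ → ℕ → ℕ → H := fun n j' k => (Real.sqrt (ω (j' + 1) k) : ℂ) •
      ∑ ℓ ∈ S j', (betahat n (lam ℓ / 2 ^ j') * starRingEnd ℂ (P ℓ (x (j' + 1) k))) • Pvec ℓ
    ∑ k ∈ range (N (j + 1)), ‖(inner ℂ (φ (j + 1) k) f : ℂ)‖ ^ 2 =
      ∑ k ∈ range (N j), ‖(inner ℂ (φ j k) f : ℂ)‖ ^ 2 +
        ∑ k ∈ range (N (j + 1)), ∑ n ∈ range r,
          ‖(inner ℂ (ψ n j k) f : ℂ)‖ ^ 2 := by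
  intro S φ ψ
  simp only [S, φ, ψ]
  -- useful facts
  have h20 : (0:ℝ) < 2 := two_pos
  have hmono : (2:ℝ) ^ ((j:ℤ) - 1) ≤ (2:ℝ) ^ (((j+1:ℕ):ℤ) - 1) := by
    apply zpow_le_zpow_right₀ one_le_two
    push_cast; omega
  have memS : ∀ j' ℓ, ℓ ∈ S j' → lam ℓ ≤ (2:ℝ) ^ ((j':ℤ) - 1) := by
    intro j' ℓ hℓ
    exact (Finset.mem_filter.mp hℓ).2
  -- three quadrature reductions
  have e1 := quad_reduce Pvec f P (x (j+1)) (ω (j+1)) (hω (j+1)) (N (j+1)) (S (j+1))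
    (fun ℓ => alphahat (lam ℓ / 2 ^ (j+1)))
    (fun ℓ hℓ ℓ' hℓ' => hquad (j+1) ℓ ℓ' (memS _ _ hℓ) (memS _ _ hℓ'))
  have e2 := quad_reduce Pvec f P (x j) (ω j) (hω j) (N j) (S j)
    (fun ℓ => alphahat (lam ℓ / 2 ^ j))
    (fun ℓ hℓ ℓ' hℓ' => hquad j ℓ ℓ' (memS _ _ hℓ) (memS _ _ hℓ'))
  have e3 : ∀ n ∈ range r, ∑ k ∈ range (N (j+1)),
      ‖(inner ℂ ((Real.sqrt (ω (j+1) k) : ℂ) •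
        ∑ ℓ ∈ S j, (betahat n (lam ℓ / 2 ^ j) * starRingEnd ℂ (P ℓ (x (j+1) k))) • Pvec ℓ) f : ℂ)‖ ^ 2
      = ∑ ℓ ∈ S j, ‖(betahat n (lam ℓ / 2 ^ j))‖ ^ 2
          * ‖(inner ℂ (Pvec ℓ) f : ℂ)‖ ^ 2 := by
    intro n _
    exact quad_reduce Pvec f P (x (j+1)) (ω (j+1)) (hω (j+1)) (N (j+1)) (S j)
      (fun ℓ => betahat n (lam ℓ / 2 ^ j))
      (fun ℓ hℓ ℓ' hℓ' => hquad (j+1) ℓ ℓ'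
        ((memS _ _ hℓ).trans hmono) ((memS _ _ hℓ').trans hmono))
  rw [e1, e2, Finset.sum_comm, Finset.sum_congr rfl e3, Finset.sum_comm,
    ← Finset.sum_add_distrib]
  -- combine the right-hand side per ℓ
  have hcomb : ∀ ℓ ∈ S j,
      ‖(alphahat (lam ℓ / 2 ^ j))‖ ^ 2 * ‖(inner ℂ (Pvec ℓ) f : ℂ)‖ ^ 2
        + ∑ n ∈ range r, ‖(betahat n (lam ℓ / 2 ^ j))‖ ^ 2
            * ‖(inner ℂ (Pvec ℓ) f : ℂ)‖ ^ 2
      = (‖(alphahat (lam ℓ / 2 ^ j))‖ ^ 2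
          + ∑ n ∈ range r, ‖(betahat n (lam ℓ / 2 ^ j))‖ ^ 2)
          * ‖(inner ℂ (Pvec ℓ) f : ℂ)‖ ^ 2 := by
    intro ℓ _
    rw [add_mul, Finset.sum_mul]
  rw [Finset.sum_congr rfl hcomb]
  -- extend the sum from S j to S (j+1)
  have hsub : S j ⊆ S (j+1) := by
    intro ℓ hℓ
    obtain ⟨h1, h2⟩ := Finset.mem_filter.mp hℓ
    refine Finset.mem_filter.mpr ⟨?_, h2.trans hmono⟩
    rw [Finset.mem_range] at h1 ⊢
    calc ℓ < 2 ^ (j+1) := h1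
    _ ≤ 2 ^ (j+1+1) := Nat.pow_le_pow_right (by norm_num) (by omega)
  have hvan : ∀ ℓ ∈ S (j+1), ℓ ∉ S j →
      (‖(alphahat (lam ℓ / 2 ^ j))‖ ^ 2
          + ∑ n ∈ range r, ‖(betahat n (lam ℓ / 2 ^ j))‖ ^ 2)
          * ‖(inner ℂ (Pvec ℓ) f : ℂ)‖ ^ 2 = 0 := by
    intro ℓ hℓ hnot
    obtain ⟨h1, h2⟩ := Finset.mem_filter.mp hℓ
    have hbig : (2:ℝ) ^ ((j:ℤ) - 1) < lam ℓ := by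
      by_contra hle
      push_neg at hle
      apply hnot
      refine Finset.mem_filter.mpr ⟨?_, hle⟩
      rw [Finset.mem_range]
      by_contra hge
      push_neg at hge
      have hlge : (ℓ:ℝ) ≤ lam ℓ := by
        rw [hlam]
        have := Real.sqrt_le_sqrt (show (ℓ:ℝ)^2 ≤ (ℓ:ℝ) * ((ℓ:ℝ)+2) by nlinarith [Nat.cast_nonneg (α := ℝ) ℓ])
        rwa [Real.sqrt_sq (Nat.cast_nonneg ℓ)] at this
      have h2' : lam ℓ ≤ (2:ℝ) ^ j := by
        have : (2:ℝ) ^ (((j+1:ℕ):ℤ) - 1) = (2:ℝ) ^ j := by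
          push_cast
          rw [add_sub_cancel_right, zpow_natCast]
        rwa [this] at h2
      have hc : (2:ℝ) ^ (j+1) ≤ (ℓ:ℝ) := by
        exact_mod_cast Nat.cast_le.mpr hge
      have : (2:ℝ) ^ j < (2:ℝ) ^ (j+1) := by
        apply pow_lt_pow_right₀ one_lt_two; omega
      linarith
    have hxi : lam ℓ / 2 ^ j ∉ Set.Icc (0:ℝ) (1/2) := by
      intro hmem
      have hhalf : (2:ℝ) ^ ((j:ℤ) - 1) = 2 ^ j / 2 := by
        rw [zpow_sub₀ (two_ne_zero), zpow_one, zpow_natCast]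
      have hpos : (0:ℝ) < 2 ^ j := by positivity
      have := hmem.2
      rw [div_le_iff₀ hpos] at this
      rw [hhalf] at hbig
      linarith
    rw [hsuppα _ hxi]
    have : ∀ n ∈ range r, ‖(betahat n (lam ℓ / 2 ^ j))‖ ^ 2 = 0 := by
      intro n _
      rw [hsuppβ n _ hxi]; simp
    rw [Finset.sum_congr rfl this]
    simp
  rw [Finset.sum_subset hsub hvan]
  -- per-ℓ mask identity
  apply Finset.sum_congr rfl
  intro ℓ _
  congr 1
  have h2ξ : lam ℓ / 2 ^ j = 2 * (lam ℓ / 2 ^ (j+1)) := by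
    rw [pow_succ]
    field_simp
  rw [h2ξ, hrefα]
  simp_rw [hrefβ, norm_mul, mul_pow]
  rw [← Finset.sum_mul, ← add_mul, htight (j+1) ℓ, one_mul]
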